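/- Let a ∈ ℝ, h > 0, K ≥ 0, and let f : ℝ → ℝ be three times continuously differentiable on [a, a + h] with |f'''(x)| ≤ K for all x ∈ [a, a + h]. Then |(√3/12)·h·(f(a + (½ + √3/6)h) − f(a + (½ − √3/6)h)) − (1/12)·h²·f'(a + h/2)| ≤ K·h⁴/864. -/

import Mathlib

open Set

/-- Second-order Taylor estimate with third-derivative bound, for plain `deriv`s. -/
lemma aux_taylor2 {φ : ℝ → ℝ} {c d C : ℝ} (hcd : c < d)
    (hφ : ContDiffOn ℝ 2 φ (Set.Icc c d))
    (h0 : ∀ y ∈ Set.Icc c d, DifferentiableAt ℝ φ y)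
    (h1 : ∀ y ∈ Set.Icc c d, DifferentiableAt ℝ (deriv φ) y)
    (h2 : ∀ y ∈ Set.Icc c d, DifferentiableAt ℝ (deriv (deriv φ)) y)
    (hC : ∀ y ∈ Set.Ioo c d, |deriv (deriv (deriv φ)) y| ≤ C) :
    |φ d - (φ c + (d - c) * deriv φ c + (d - c) ^ 2 / 2 * deriv (deriv φ) c)|
      ≤ C * (d - c) ^ 3 / 6 := by
  set s := Set.Icc c d with hs
  have hud : UniqueDiffOn ℝ s := uniqueDiffOn_Icc hcd
  have hcmem : c ∈ s := Set.left_mem_Icc.mpr hcd.le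
  have E1 : Set.EqOn (iteratedDerivWithin 1 φ s) (deriv φ) s := by
    intro y hy
    rw [iteratedDerivWithin_one]
    exact (h0 y hy).derivWithin (hud y hy)
  have E2 : Set.EqOn (iteratedDerivWithin 2 φ s) (deriv (deriv φ)) s := by
    intro y hy
    rw [show (2 : ℕ) = 1 + 1 from rfl, iteratedDerivWithin_succ,
      derivWithin_congr E1 (E1 hy)]
    exact (h1 y hy).derivWithin (hud y hy)
  have hf' : DifferentiableOn ℝ (iteratedDerivWithin 2 φ s) (Set.Ioo c d) := by
    refine DifferentiableOn.congr (f := deriv (deriv φ)) ?_ ?_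
    · exact fun y hy => (h2 y (Set.Ioo_subset_Icc_self hy)).differentiableWithinAt
    · exact fun y hy => E2 (Set.Ioo_subset_Icc_self hy)
  obtain ⟨x', hx', hT⟩ := taylor_mean_remainder_lagrange (n := 2) hcd.ne
    (by rwa [uIcc_of_le hcd.le]) (by rwa [uIcc_of_le hcd.le, uIoo_of_le hcd.le])
  rw [uIoo_of_le hcd.le] at hx'
  rw [uIcc_of_le hcd.le] at hT
  have hTay : taylorWithinEval φ 2 s c d
      = φ c + (d - c) * deriv φ c + (d - c) ^ 2 / 2 * deriv (deriv φ) c := by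
    rw [taylor_within_apply, Finset.sum_range_succ, Finset.sum_range_succ,
      Finset.sum_range_one]
    simp only [iteratedDerivWithin_zero, E1 hcmem, E2 hcmem, smul_eq_mul, Nat.factorial]
    push_cast
    ring
  have h3 : iteratedDerivWithin 3 φ s x' = deriv (deriv (deriv φ)) x' := by
    have hmem : x' ∈ s := Set.Ioo_subset_Icc_self hx'
    rw [show (3 : ℕ) = 2 + 1 from rfl, iteratedDerivWithin_succ,
      derivWithin_congr E2 (E2 hmem),
      derivWithin_of_mem_nhds (Icc_mem_nhds hx'.1 hx'.2)]
  rw [hTay, h3] at hT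
  rw [hT]
  have hd : (0 : ℝ) < d - c := sub_pos.mpr hcd
  calc |deriv (deriv (deriv φ)) x' * (d - c) ^ (2 + 1) / ((2 + 1).factorial : ℕ)|
      = |deriv (deriv (deriv φ)) x'| * (d - c) ^ 3 / 6 := by
        rw [abs_div, abs_mul, abs_pow, abs_of_pos hd]
        norm_num [Nat.factorial]
    _ ≤ C * (d - c) ^ 3 / 6 := by
        gcongr
        exact hC x' hx'

theorem stmt_15 (a h K : ℝ) (hh : 0 < h) (hK : 0 ≤ K) (f : ℝ → ℝ)
    (hf : ContDiffOn ℝ 3 f (Set.Icc a (a + h)))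
    (hbound : ∀ x ∈ Set.Icc a (a + h),
      |iteratedDerivWithin 3 f (Set.Icc a (a + h)) x| ≤ K) :
    |Real.sqrt 3 / 12 * h * (f (a + (1 / 2 + Real.sqrt 3 / 6) * h)
                              - f (a + (1 / 2 - Real.sqrt 3 / 6) * h))
        - 1 / 12 * h ^ 2 * derivWithin f (Set.Icc a (a + h)) (a + h / 2)|
      ≤ K * h ^ 4 / 864 := by
  have hs3 : Real.sqrt 3 * Real.sqrt 3 = 3 := Real.mul_self_sqrt (by norm_num)
  have hs3pos : 0 < Real.sqrt 3 := Real.sqrt_pos.mpr (by norm_num)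
  have hs3lt : Real.sqrt 3 < 3 := by nlinarith
  set m := a + h / 2 with hm
  set δ := Real.sqrt 3 / 6 * h with hδdef
  have hδ : 0 < δ := by positivity
  have hδh : δ < h / 2 := by rw [hδdef]; nlinarith
  have hx1 : a + (1 / 2 + Real.sqrt 3 / 6) * h = m + δ := by rw [hm, hδdef]; ring
  have hx2 : a + (1 / 2 - Real.sqrt 3 / 6) * h = m - δ := by rw [hm, hδdef]; ring
  set I := Set.Ioo a (a + h) with hI'
  have hI : ContDiffOn ℝ 3 f I := hf.mono Set.Ioo_subset_Icc_self
  have hd1 : ContDiffOn ℝ 2 (deriv f) I := hI.deriv_of_isOpen isOpen_Ioo (by norm_num)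
  have hd2 : ContDiffOn ℝ 1 (deriv (deriv f)) I := hd1.deriv_of_isOpen isOpen_Ioo (by norm_num)
  have D0 : ∀ y ∈ I, DifferentiableAt ℝ f y := fun y hy =>
    ((hI y hy).contDiffAt (isOpen_Ioo.mem_nhds hy)).differentiableAt (by norm_num)
  have D1 : ∀ y ∈ I, DifferentiableAt ℝ (deriv f) y := fun y hy =>
    ((hd1 y hy).contDiffAt (isOpen_Ioo.mem_nhds hy)).differentiableAt (by norm_num)
  have D2 : ∀ y ∈ I, DifferentiableAt ℝ (deriv (deriv f)) y := fun y hy =>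
    ((hd2 y hy).contDiffAt (isOpen_Ioo.mem_nhds hy)).differentiableAt (by norm_num)
  -- the third derivative is bounded by K on I
  have Hb : ∀ y ∈ I, |deriv (deriv (deriv f)) y| ≤ K := by
    intro y hy
    have e1 : iteratedDerivWithin 3 f (Set.Icc a (a + h)) y = iteratedDeriv 3 f y := by
      rw [iteratedDerivWithin_eq_iteratedFDerivWithin, iteratedDeriv_eq_iteratedFDeriv]
      have h2 := iteratedFDerivWithin_inter (𝕜 := ℝ) (f := f) (n := 3)
        (s := Set.Icc a (a + h)) (isOpen_Ioo.mem_nhds hy)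
      rw [Set.inter_eq_self_of_subset_right Set.Ioo_subset_Icc_self] at h2
      rw [← h2, iteratedFDerivWithin_of_isOpen 3 isOpen_Ioo hy]
    have e2 : iteratedDeriv 3 f = deriv (deriv (deriv f)) := by
      rw [show (3 : ℕ) = 1 + 1 + 1 from rfl, iteratedDeriv_succ, iteratedDeriv_succ,
        iteratedDeriv_one]
    have := hbound y (Set.Ioo_subset_Icc_self hy)
    rwa [e1, e2] at this
  have hma : a < m := by rw [hm]; linarith
  have hmδ : m + δ < a + h := by rw [hm]; linarith
  have hmδ' : a < m - δ := by rw [hm]; linarith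
  have hsub1 : Set.Icc m (m + δ) ⊆ I := fun y hy =>
    ⟨lt_of_lt_of_le hma hy.1, lt_of_le_of_lt hy.2 hmδ⟩
  have hcd : m < m + δ := by linarith
  -- right expansion
  have hA := aux_taylor2 (C := K) hcd ((hI.mono hsub1).of_le (by norm_num))
    (fun y hy => D0 y (hsub1 hy)) (fun y hy => D1 y (hsub1 hy))
    (fun y hy => D2 y (hsub1 hy))
    (fun y hy => Hb y (hsub1 (Set.Ioo_subset_Icc_self hy)))
  simp only [add_sub_cancel_left] at hA
  -- left expansion, via the reflection g t = f (2m - t)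
  set g : ℝ → ℝ := fun t => f (2 * m - t) with hg
  have hrefl : ∀ y ∈ Set.Icc m (m + δ), 2 * m - y ∈ I := by
    intro y hy
    exact ⟨by linarith [hy.2], by linarith [hy.1]⟩
  have eg1 : deriv g = fun t => -deriv f (2 * m - t) := by
    funext t
    exact deriv_comp_const_sub ..
  have eg2 : deriv (deriv g) = fun t => deriv (deriv f) (2 * m - t) := by
    rw [eg1]
    funext t
    calc deriv (fun t => -deriv f (2 * m - t)) t
        = -deriv (fun t => deriv f (2 * m - t)) t := deriv.neg
      _ = -(-deriv (deriv f) (2 * m - t)) := by rw [deriv_comp_const_sub]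
      _ = deriv (deriv f) (2 * m - t) := neg_neg _
  have eg3 : deriv (deriv (deriv g)) = fun t => -deriv (deriv (deriv f)) (2 * m - t) := by
    rw [eg2]
    funext t
    exact deriv_comp_const_sub ..
  have hφ2 : ContDiffOn ℝ 2 g (Set.Icc m (m + δ)) := by
    have := ContDiffOn.comp (hI.of_le (m := 2) (by norm_num))
      ((contDiff_const.sub contDiff_id).contDiffOn) (fun y hy => hrefl y hy)
    exact this.congr fun y _ => rfl
  have D0g : ∀ y ∈ Set.Icc m (m + δ), DifferentiableAt ℝ g y := by
    intro y hy
    exact (D0 _ (hrefl y hy)).comp y ((differentiableAt_const _).sub differentiableAt_id)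
  have D1g : ∀ y ∈ Set.Icc m (m + δ), DifferentiableAt ℝ (deriv g) y := by
    intro y hy
    rw [eg1]
    exact ((D1 _ (hrefl y hy)).comp y
      ((differentiableAt_const _).sub differentiableAt_id)).neg
  have D2g : ∀ y ∈ Set.Icc m (m + δ), DifferentiableAt ℝ (deriv (deriv g)) y := by
    intro y hy
    rw [eg2]
    exact (D2 _ (hrefl y hy)).comp y ((differentiableAt_const _).sub differentiableAt_id)
  have Hbg : ∀ y ∈ Set.Ioo m (m + δ), |deriv (deriv (deriv g)) y| ≤ K := by
    intro y hy
    rw [eg3]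
    simpa using Hb _ (hrefl y (Set.Ioo_subset_Icc_self hy))
  have hB := aux_taylor2 (C := K) hcd hφ2 D0g D1g D2g Hbg
  simp only [add_sub_cancel_left] at hB
  have h2m : 2 * m - m = m := by ring
  have h2mδ : 2 * m - (m + δ) = m - δ := by ring
  have gv1 : g (m + δ) = f (m - δ) := by rw [hg]; simp only []; rw [h2mδ]
  have gv2 : g m = f m := by rw [hg]; simp only []; rw [h2m]
  have gd1 : deriv g m = -deriv f m := by
    rw [eg1]; show -deriv f (2 * m - m) = -deriv f m; rw [h2m]
  have gd2 : deriv (deriv g) m = deriv (deriv f) m := by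
    rw [eg2]; show deriv (deriv f) (2 * m - m) = deriv (deriv f) m; rw [h2m]
  rw [gv1, gv2, gd1, gd2] at hB
  have hdw : derivWithin f (Set.Icc a (a + h)) m = deriv f m :=
    derivWithin_of_mem_nhds (Icc_mem_nhds (by linarith) (by linarith))
  rw [hx1, hx2, hdw]
  set A := f (m + δ) - (f m + δ * deriv f m + δ ^ 2 / 2 * deriv (deriv f) m) with hAdef
  set B := f (m - δ) - (f m + δ * -deriv f m + δ ^ 2 / 2 * deriv (deriv f) m) with hBdef
  have key : Real.sqrt 3 / 12 * h * (f (m + δ) - f (m - δ)) - 1 / 12 * h ^ 2 * deriv f m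
      = Real.sqrt 3 / 12 * h * (A - B) := by
    rw [hAdef, hBdef, hδdef]
    linear_combination (h ^ 2 * deriv f m / 36) * hs3
  rw [key]
  have tri : |A - B| ≤ |A| + |B| := by
    rw [sub_eq_add_neg]
    exact (abs_add_le _ _).trans (by rw [abs_neg])
  calc |Real.sqrt 3 / 12 * h * (A - B)| = Real.sqrt 3 / 12 * h * |A - B| := by
        rw [abs_mul, abs_of_nonneg (by positivity : (0:ℝ) ≤ Real.sqrt 3 / 12 * h)]
    _ ≤ Real.sqrt 3 / 12 * h * (|A| + |B|) := by gcongr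
    _ ≤ Real.sqrt 3 / 12 * h * (K * δ ^ 3 / 6 + K * δ ^ 3 / 6) := by gcongr
    _ = K * h ^ 4 / 864 := by
        rw [hδdef]
        linear_combination ((Real.sqrt 3 * Real.sqrt 3 + 3) * K * h ^ 4 / 7776) * hs3
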